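/- The set of derivations of the ω-Lie algebra L₁, which equals the ℂ-span of the two 3×3 complex matrices E₁₃ − E₂₃ and E₃₃ (where E_{ij} denotes the matrix with (i,j)-entry 1 and all other entries 0, acting on ℂ³ relative to the basis x,y,z), is a Lie subalgebra of the 3×3 complex matrices under the commutator bracket which is solvable but not nilpotent. -/

import Mathlib

noncomputable section

/-- The underlying space ℂ³ of the ω-Lie algebra L₁. -/
abbrev V3 : Type := Fin 3 → ℂ

/-- The basis vector x = e₁. -/
def vx : V3 := ![1, 0, 0]

/-- The basis vector y = e₂. -/
def vy : V3 := ![0, 1, 0]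

/-- The basis vector z = e₃. -/
def vz : V3 := ![0, 0, 1]

/-- `d : ℂ³ → ℂ³` is a derivation of the bracket `b`. -/
def IsDer (b : V3 →ₗ[ℂ] V3 →ₗ[ℂ] V3) (d : V3 →ₗ[ℂ] V3) : Prop :=
  ∀ u v : V3, d (b u v) = b (d u) v + b u (d v)

attribute [local instance 100] LieRing.ofAssociativeRing

def M1 : Matrix (Fin 3) (Fin 3) ℂ :=
  Matrix.single 0 2 (1 : ℂ) - Matrix.single 1 2 (1 : ℂ)
def M2 : Matrix (Fin 3) (Fin 3) ℂ := Matrix.single 2 2 (1 : ℂ)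

lemma lieM1M2 : ⁅M1, M2⁆ = M1 := by
  ext i j
  fin_cases i <;> fin_cases j <;>
    simp [M1, M2, Ring.lie_def, Matrix.mul_apply, Matrix.single, Fin.sum_univ_three]

lemma lieM2M1 : ⁅M2, M1⁆ = -M1 := by rw [← lie_skew, lieM1M2]

def P : Submodule ℂ (Matrix (Fin 3) (Fin 3) ℂ) := Submodule.span ℂ {M1, M2}

lemma memP {A : Matrix (Fin 3) (Fin 3) ℂ} : A ∈ P ↔ ∃ a c : ℂ, a • M1 + c • M2 = A :=
  Submodule.mem_span_pair

lemma hM1P : M1 ∈ P := Submodule.subset_span (Set.mem_insert _ _)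
lemma hM2P : M2 ∈ P := Submodule.subset_span (Set.mem_insert_of_mem _ rfl)

lemma brkP (a c a' c' : ℂ) :
    ⁅a • M1 + c • M2, a' • M1 + c' • M2⁆ = (a * c' - c * a') • M1 := by
  simp [lie_add, add_lie, lie_smul, smul_lie, lieM1M2, lieM2M1, smul_smul, smul_neg, sub_smul]
  module

def S : LieSubalgebra ℂ (Matrix (Fin 3) (Fin 3) ℂ) :=
  { P with
    lie_mem' := by
      intro x y hx hy
      obtain ⟨a, c, rfl⟩ := memP.mp hx
      obtain ⟨a', c', rfl⟩ := memP.mp hy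
      rw [brkP]
      exact P.smul_mem _ hM1P }

def m1 : S := ⟨M1, hM1P⟩
def m2 : S := ⟨M2, hM2P⟩

lemma m1_ne_zero : m1 ≠ 0 := by
  intro h
  have := congrFun (congrFun (Subtype.ext_iff.mp h) 0) 2
  simp [m1, M1, Matrix.single] at this

lemma decompS (s : S) : ∃ a c : ℂ, s = a • m1 + c • m2 := by
  obtain ⟨a, c, h⟩ := memP.mp s.2
  exact ⟨a, c, Subtype.ext h.symm⟩

lemma lieS12 : ⁅m1, m2⁆ = m1 := Subtype.ext lieM1M2
lemma lieS21 : ⁅m2, m1⁆ = -m1 := by rw [← lie_skew, lieS12]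

lemma brkS (x y : S) : ∃ c : ℂ, ⁅x, y⁆ = c • m1 := by
  obtain ⟨a, c, rfl⟩ := decompS x
  obtain ⟨a', c', rfl⟩ := decompS y
  refine ⟨a * c' - c * a', Subtype.ext ?_⟩
  exact brkP a c a' c'

def J : LieIdeal ℂ S :=
  { Submodule.span ℂ {m1} with
    lie_mem := by
      intro x m hm
      obtain ⟨c, rfl⟩ := Submodule.mem_span_singleton.mp hm
      obtain ⟨c', hc'⟩ := brkS x m1
      rw [lie_smul, hc']
      exact Submodule.smul_mem _ _ (Submodule.smul_mem _ _
        (Submodule.mem_span_singleton_self m1)) }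

lemma memJ {t : S} (ht : t ∈ J) : ∃ c : ℂ, c • m1 = t := Submodule.mem_span_singleton.mp ht

lemma solvS : LieAlgebra.IsSolvable S := by
  have h1 : LieAlgebra.derivedSeries ℂ S 1 ≤ J := by
    rw [LieAlgebra.derivedSeries_def, LieAlgebra.derivedSeriesOfIdeal_succ,
      LieAlgebra.derivedSeriesOfIdeal_zero, LieSubmodule.lieIdeal_oper_eq_span,
      LieSubmodule.lieSpan_le]
    rintro t ⟨x, n, rfl⟩
    obtain ⟨c, hc⟩ := brkS x n
    rw [hc]
    exact Submodule.smul_mem _ _ (Submodule.mem_span_singleton_self m1)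
  have h2 : ⁅J, J⁆ = (⊥ : LieIdeal ℂ S) := by
    rw [LieSubmodule.lieIdeal_oper_eq_span, LieSubmodule.lieSpan_eq_bot_iff]
    rintro t ⟨x, n, rfl⟩
    obtain ⟨c, hc⟩ := memJ x.2
    obtain ⟨c', hc'⟩ := memJ n.2
    rw [← hc, ← hc']
    simp
  refine (LieAlgebra.isSolvable_iff ℂ S).mpr ⟨2, ?_⟩
  have : LieAlgebra.derivedSeries ℂ S 2 =
      ⁅LieAlgebra.derivedSeries ℂ S 1, LieAlgebra.derivedSeries ℂ S 1⁆ := rfl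
  rw [this, eq_bot_iff, ← h2]
  exact LieSubmodule.mono_lie h1 h1

lemma notNilpS : ¬ LieRing.IsNilpotent S := by
  have key : ∀ k, m1 ∈ LieModule.lowerCentralSeries ℂ S S k := by
    intro k
    induction k with
    | zero => exact LieSubmodule.mem_top _
    | succ k ih =>
      rw [LieModule.lowerCentralSeries_succ]
      have h : ⁅m2, m1⁆ ∈ ⁅(⊤ : LieIdeal ℂ S), LieModule.lowerCentralSeries ℂ S S k⁆ :=
        LieSubmodule.lie_mem_lie (LieSubmodule.mem_top _) ih
      rw [lieS21] at h
      simpa using neg_mem h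
  intro hn
  obtain ⟨k, hk⟩ := (LieModule.isNilpotent_iff ℂ S S).mp hn
  have := key k
  rw [hk] at this
  exact m1_ne_zero ((LieSubmodule.mem_bot _).mp this)

/-- The set of derivations of the ω-Lie algebra L₁ (a matrix `A` is identified
with the derivation sending a basis vector `eᵢ` to the `i`-th row of `A`, i.e. with
`Matrix.toLin' A.transpose`) equals the ℂ-span of the matrices `E₁₃ - E₂₃` and `E₃₃`, and this span
is a Lie subalgebra of the 3×3 complex matrices (under the commutator bracket) which is
solvable but not nilpotent. -/
theorem derivation_algebra_L1_solvable_not_nilpotent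
    (b : V3 →ₗ[ℂ] V3 →ₗ[ℂ] V3)
    (hskew : ∀ u v : V3, b u v = - b v u)
    (hxy : b vx vy = vy) (hxz : b vx vz = 0) (hyz : b vy vz = vz) :
    ∃ S : LieSubalgebra ℂ (Matrix (Fin 3) (Fin 3) ℂ),
      (S : Set (Matrix (Fin 3) (Fin 3) ℂ)) =
        (Submodule.span ℂ
          {Matrix.single 0 2 (1 : ℂ) - Matrix.single 1 2 (1 : ℂ),
           Matrix.single 2 2 (1 : ℂ)} : Submodule ℂ (Matrix (Fin 3) (Fin 3) ℂ)) ∧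
      {A : Matrix (Fin 3) (Fin 3) ℂ | IsDer b (Matrix.toLin' A.transpose)} =
        (S : Set (Matrix (Fin 3) (Fin 3) ℂ)) ∧
      LieAlgebra.IsSolvable S ∧ ¬ LieRing.IsNilpotent S := by
  refine ⟨S, rfl, ?_, solvS, notNilpS⟩
  have h0 : ∀ u : V3, b u u = 0 := by
    intro u
    have h := hskew u u
    have h2 : (2 : ℂ) • b u u = 0 := by rw [two_smul]; nth_rewrite 2 [h]; simp
    rcases smul_eq_zero.mp h2 with h' | h'
    · norm_num at h'
    · exact h'
  have hyx : b vy vx = -vy := by rw [hskew, hxy]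
  have hzx : b vz vx = 0 := by rw [hskew, hxz, neg_zero]
  have hzy : b vz vy = -vz := by rw [hskew, hyz]
  have hbasis : ∀ u : V3, u = u 0 • vx + u 1 • vy + u 2 • vz := by
    intro u; funext i; fin_cases i <;> simp [vx, vy, vz]
  have hb : ∀ u v : V3, b u v = ![0, u 0 * v 1 - u 1 * v 0, u 1 * v 2 - u 2 * v 1] := by
    intro u v
    conv_lhs => rw [hbasis u, hbasis v]
    simp only [map_add, map_smul, LinearMap.add_apply, LinearMap.smul_apply,
      hxy, hxz, hyz, hyx, hzx, hzy, h0]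
    funext i
    fin_cases i <;> simp [vx, vy, vz] <;> ring
  have hd : ∀ (A : Matrix (Fin 3) (Fin 3) ℂ) (v : V3) (i : Fin 3),
      Matrix.toLin' A.transpose v i = A 0 i * v 0 + A 1 i * v 1 + A 2 i * v 2 := by
    intro A v i
    simp [Matrix.toLin'_apply, Matrix.mulVec, dotProduct, Fin.sum_univ_three,
      Matrix.transpose_apply]
  ext A
  constructor
  · intro hA
    have E1 := hA vx vy; rw [hxy] at E1
    have E2 := hA vx vz; rw [hxz] at E2
    have E3 := hA vy vz; rw [hyz] at E3
    have e10 := congrFun E1 0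
    have e11 := congrFun E1 1
    have e12 := congrFun E1 2
    have e20 := congrFun E2 0
    have e21 := congrFun E2 1
    have e22 := congrFun E2 2
    have e30 := congrFun E3 0
    have e31 := congrFun E3 1
    have e32 := congrFun E3 2
    simp only [hb, hd, vx, vy, vz, Pi.add_apply, map_zero, LinearMap.zero_apply] at e10 e11 e12 e20 e21 e22 e30 e31 e32
    simp [Matrix.cons_val_zero, Matrix.cons_val_one] at e10 e11 e12 e20 e21 e22 e30 e31 e32
    show A ∈ P
    rw [memP]
    refine ⟨A 0 2, A 2 2, ?_⟩
    ext i j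
    fin_cases i <;> fin_cases j <;>
      simp [M1, M2, Matrix.single]
    all_goals first
      | rfl | exact e11.symm | exact e22 | exact e10.symm | exact e32.symm
      | exact e12.symm | exact e30.symm | exact e21
  · intro hA
    obtain ⟨a, c, rfl⟩ := memP.mp (show _ ∈ P from hA)
    intro u v
    funext i
    simp only [hb, hd]
    fin_cases i <;>
      simp [M1, M2, Matrix.single, Matrix.add_apply, Matrix.smul_apply] <;> ring
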